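/- Let E be a real normed vector space, C ⊆ E a nonempty compact convex set, f : E → ℝ, Δ : E → E → ℝ, C_f ≥ 0 such that Δ satisfies the curvature bound C_f for f on C, and ε ≥ 0. Let a : ℕ → ℝ with a_t > 0 for all t, A_t = ∑_{i=0}^t a_i, and α_t = a_t/A_t. Let x, v : ℕ → E with x_0 ∈ C, v_t ∈ C, and x_{t+1} = (1 − α_t)·x_t + α_t·v_t for all t. Define L_t = (1/A_t)·∑_{i=0}^t a_i·[ f(x_i) + Δ x_i (α_i·(v_i − x_i))/α_i − (1/2)·C_f − (α_i/2)·ε·C_f ] and G_t = f(x_{t+1}) − L_t. Then A_0·G_0 ≤ (a_0²/(2·A_0))·C_f·(1+2ε) + (a_0/2)·C_f, and for all t ≥ 1, A_t·G_t − A_{t−1}·G_{t−1} ≤ (a_t²/(2·A_t))·C_f·(1+2ε) + (a_t/2)·C_f. -/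

import Mathlib

/-- ADGT one-step inequality for the piecewise linear model: with weights `a t > 0`,
`A t = ∑_{i=0}^t a i`, `α t = a t / A t`, the lower-bound estimate `L` using the
residual term `-(1/2) * Cf - (α i / 2) * ε * Cf` and gap `G t = f (x (t+1)) - L t`
satisfy `A 0 * G 0 ≤ (a 0² / (2 A 0)) * Cf * (1+2ε) + (a 0 / 2) * Cf` and, for
`t ≥ 1`, `A t * G t - A (t-1) * G (t-1) ≤ (a t² / (2 A t)) * Cf * (1+2ε) + (a t / 2) * Cf`. -/
theorem adgt_one_step_pw_linear
    {E : Type*} [NormedAddCommGroup E] [NormedSpace ℝ E]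
    (C : Set E) (hCne : C.Nonempty) (hCcomp : IsCompact C) (hCconv : Convex ℝ C)
    (f : E → ℝ)
    (Δ : E → E → ℝ) (Cf : ℝ) (hCf : 0 ≤ Cf)
    (hcurv : ∀ x ∈ C, ∀ v ∈ C, ∀ α ∈ Set.Ioc (0:ℝ) 1,
      |f (x + α • (v - x)) - f x - Δ x (α • (v - x))| ≤ α ^ 2 / 2 * Cf)
    (ε : ℝ) (hε : 0 ≤ ε)
    (a A α : ℕ → ℝ) (ha : ∀ t, 0 < a t)
    (hA : ∀ t : ℕ, A t = ∑ i ∈ Finset.range (t + 1), a i)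
    (hα : ∀ t : ℕ, α t = a t / A t)
    (x v : ℕ → E) (hx0 : x 0 ∈ C) (hv : ∀ t, v t ∈ C)
    (hstep : ∀ t : ℕ, x (t + 1) = (1 - α t) • x t + α t • v t)
    (L G : ℕ → ℝ)
    (hL : ∀ t : ℕ, L t = (1 / A t) * ∑ i ∈ Finset.range (t + 1),
      a i * (f (x i) + Δ (x i) (α i • (v i - x i)) / α i - 1 / 2 * Cf - α i / 2 * ε * Cf))
    (hG : ∀ t : ℕ, G t = f (x (t + 1)) - L t) :
    A 0 * G 0 ≤ a 0 ^ 2 / (2 * A 0) * Cf * (1 + 2 * ε) + a 0 / 2 * Cf ∧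
      ∀ t : ℕ, 1 ≤ t →
        A t * G t - A (t - 1) * G (t - 1) ≤
          a t ^ 2 / (2 * A t) * Cf * (1 + 2 * ε) + a t / 2 * Cf := by

  have hApos : ∀ t, 0 < A t := fun t => by
    rw [hA]; exact Finset.sum_pos (fun i _ => ha i) (by simp)
  have hAne : ∀ t, A t ≠ 0 := fun t => (hApos t).ne'
  have hαpos : ∀ t, 0 < α t := fun t => by
    rw [hα]; exact div_pos (ha t) (hApos t)
  have haA : ∀ t, a t ≤ A t := fun t => by
    rw [hA]
    exact Finset.single_le_sum (fun i _ => (ha i).le) (Finset.self_mem_range_succ t)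
  have hαle : ∀ t, α t ≤ 1 := fun t => by
    rw [hα]; exact div_le_one_of_le₀ (haA t) (hApos t).le
  have hxC : ∀ t, x t ∈ C := by
    intro t
    induction t with
    | zero => exact hx0
    | succ n ih =>
      rw [hstep]
      exact hCconv ih (hv n) (by linarith [hαle n]) (hαpos n).le (by ring)
  have hkey : ∀ t, |f (x (t + 1)) - f (x t) - Δ (x t) (α t • (v t - x t))| ≤
      α t ^ 2 / 2 * Cf := by
    intro t
    have h := hcurv (x t) (hxC t) (v t) (hv t) (α t) ⟨hαpos t, hαle t⟩
    have hx' : x (t + 1) = x t + α t • (v t - x t) := by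
      rw [hstep]; rw [sub_smul, one_smul, smul_sub]; abel
    rwa [← hx'] at h
  have hAL : ∀ u, A u * L u = ∑ i ∈ Finset.range (u + 1),
      a i * (f (x i) + Δ (x i) (α i • (v i - x i)) / α i - 1 / 2 * Cf - α i / 2 * ε * Cf) := by
    intro u
    rw [hL, ← mul_assoc, mul_one_div, div_self (hAne u), one_mul]
  constructor
  · have h0 : A 0 = a 0 := by rw [hA]; simp
    have hα0 : α 0 = 1 := by rw [hα, h0, div_self (ha 0).ne']
    have hL0 : A 0 * L 0 = a 0 * (f (x 0) + Δ (x 0) (α 0 • (v 0 - x 0)) / α 0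
        - 1 / 2 * Cf - α 0 / 2 * ε * Cf) := by
      rw [hAL]; simp
    have hk := (abs_le.mp (hkey 0)).2
    rw [hα0] at hk
    have hd : a 0 ^ 2 / (2 * A 0) = a 0 / 2 := by
      rw [h0, sq, mul_comm (2:ℝ) (a 0), mul_div_mul_left _ _ (ha 0).ne']
    rw [hd, hG, mul_sub, hL0, hα0, h0, div_one]
    have hmul : a 0 * (f (x (0 + 1)) - f (x 0) - Δ (x 0) ((1 : ℝ) • (v 0 - x 0))) ≤
        a 0 * ((1 : ℝ) ^ 2 / 2 * Cf) := mul_le_mul_of_nonneg_left hk (ha 0).le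
    have hεCf : 0 ≤ ε * Cf := mul_nonneg hε hCf
    nlinarith [hmul, mul_nonneg (ha 0).le hεCf]
  · intro t ht
    obtain ⟨s, rfl⟩ : ∃ s, t = s + 1 := ⟨t - 1, by omega⟩
    simp only [Nat.add_sub_cancel]
    have hsum : A (s + 1) * L (s + 1) = A s * L s
        + a (s + 1) * (f (x (s + 1)) + Δ (x (s + 1)) (α (s + 1) • (v (s + 1) - x (s + 1))) / α (s + 1)
        - 1 / 2 * Cf - α (s + 1) / 2 * ε * Cf) := by
      rw [hAL, hAL, Finset.sum_range_succ]
    have hAn : A (s + 1) = A s + a (s + 1) := by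
      rw [hA, hA, Finset.sum_range_succ]
    have hΔ : a (s + 1) * (Δ (x (s + 1)) (α (s + 1) • (v (s + 1) - x (s + 1))) / α (s + 1))
        = A (s + 1) * Δ (x (s + 1)) (α (s + 1) • (v (s + 1) - x (s + 1))) := by
      set d := Δ (x (s + 1)) (α (s + 1) • (v (s + 1) - x (s + 1))) with hdd
      rw [hα]
      field_simp [(ha (s + 1)).ne', hAne (s + 1)]
    have hk := (abs_le.mp (hkey (s + 1))).2
    have hbound : A (s + 1) * (f (x (s + 1 + 1)) - f (x (s + 1))
        - Δ (x (s + 1)) (α (s + 1) • (v (s + 1) - x (s + 1)))) ≤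
        a (s + 1) ^ 2 / (2 * A (s + 1)) * Cf := by
      have h1 := mul_le_mul_of_nonneg_left hk (hApos (s + 1)).le
      have h2 : A (s + 1) * (α (s + 1) ^ 2 / 2 * Cf)
          = a (s + 1) ^ 2 / (2 * A (s + 1)) * Cf := by
        rw [hα]
        field_simp [hAne (s + 1)]
      linarith
    have hεterm : a (s + 1) * (α (s + 1) / 2 * ε * Cf)
        = a (s + 1) ^ 2 / (2 * A (s + 1)) * (ε * Cf) := by
      rw [hα]
      field_simp [hAne (s + 1)]
    have hεCf : 0 ≤ ε * Cf := mul_nonneg hε hCf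
    have hεge : 0 ≤ a (s + 1) ^ 2 / (2 * A (s + 1)) * (ε * Cf) := by
      apply mul_nonneg _ hεCf
      apply div_nonneg (sq_nonneg _)
      linarith [hApos (s + 1)]
    have e1 : A (s + 1) * G (s + 1) - A s * G s
        = A (s + 1) * (f (x (s + 1 + 1)) - f (x (s + 1))
            - Δ (x (s + 1)) (α (s + 1) • (v (s + 1) - x (s + 1))))
          + a (s + 1) / 2 * Cf + a (s + 1) ^ 2 / (2 * A (s + 1)) * (ε * Cf) := by
      rw [hG, hG, mul_sub, mul_sub, hsum]
      linear_combination f (x (s + 1)) * hAn - hΔ + hεterm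
    have e2 : a (s + 1) ^ 2 / (2 * A (s + 1)) * Cf * (1 + 2 * ε)
        = a (s + 1) ^ 2 / (2 * A (s + 1)) * Cf
          + 2 * (a (s + 1) ^ 2 / (2 * A (s + 1)) * (ε * Cf)) := by ring
    linarith [hbound, hεge]
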